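/- Let q be an odd prime. (i) Every element of ℤ[ζ_q] is congruent modulo (1−ζ_q)^q to exactly one element of the form a₀ + a₁(1−ζ_q) + ⋯ + a_{q−2}(1−ζ_q)^{q−2} with integers 0 ≤ a₀ < q² and 0 ≤ a₁, …, a_{q−2} < q. (ii) For such a representative, there exists ξ ∈ ℤ[ζ_q] with a₀ + a₁(1−ζ_q) + ⋯ + a_{q−2}(1−ζ_q)^{q−2} ≡ ξ^q (mod (1−ζ_q)^q) if and only if a₁ = ⋯ = a_{q−2} = 0 and a₀ ≡ b^q (mod q²) for some b ∈ ℤ. -/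

import Mathlib

open Finset Polynomial

/-- `Li s` is the polylogarithm of negative index, `Li_{-s}(x) = (x d/dx)^s (x/(1-x))`,
viewed as a function `ℚ → ℚ` (well defined away from `x = 1`). -/
noncomputable def Li (s : ℕ) : ℚ → ℚ :=
  (fun f x => x * deriv f x)^[s] (fun x => x / (1 - x))

/-- `zLocSpan q c x` means `x ∈ c·ℤ_(q)`, i.e. `x = c·(a/b)` with `q ∤ b`. -/
def zLocSpan (q : ℕ) (c x : ℚ) : Prop :=
  ∃ a b : ℤ, ¬ (q : ℤ) ∣ b ∧ x * (b : ℚ) = c * (a : ℚ)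

/-- The integer coefficient `Σ_{1≤j,k,l≤q−1, k ≡ jl (mod q)} (−1)^k C(t,k)·j·l`. -/
def fqCoeff (q t : ℕ) : ℤ :=
  ∑ j ∈ Finset.Icc 1 (q-1), ∑ k ∈ Finset.Icc 1 (q-1), ∑ l ∈ Finset.Icc 1 (q-1),
    if (k : ZMod q) = (j : ZMod q) * (l : ZMod q) then (-1)^k * (t.choose k : ℤ) * j * l else 0

/-- The polynomial `f_q(x) = Σ_{t=1}^q fqCoeff q t · x^t / t ∈ ℚ[x]` (in fact in `ℤ_(q)[x]`). -/
noncomputable def fqPoly (q : ℕ) : Polynomial ℚ :=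
  ∑ t ∈ Finset.Icc 1 q, Polynomial.C ((fqCoeff q t : ℚ) / (t : ℚ)) * Polynomial.X ^ t

/-- Reduction of a rational with denominator prime to `N` to `ZMod N`. -/
def ratToZMod (N : ℕ) (x : ℚ) : ZMod N := (x.num : ZMod N) * ((x.den : ℕ) : ZMod N)⁻¹

/-- The set `S_q = { a − f_q(a) mod q² : a = 0,…,q−1 } ⊆ ℤ/q²ℤ`. -/
def Sq (q : ℕ) : Set (ZMod (q^2)) :=
  { y | ∃ a : ℕ, a < q ∧ y = ratToZMod (q^2) ((a : ℚ) - (fqPoly q).eval (a : ℚ)) }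

/-- Congruence modulo the ideal of `ℤ[ζ]` generated by `(1-ζ)^e`, for elements of `ℂ`. -/
def congZeta (ζ : ℂ) (e : ℕ) (x y : ℂ) : Prop :=
  ∃ P : Polynomial ℤ, x - y = (1 - ζ)^e * (Polynomial.aeval ζ P)

/-- `jstar q j` is the representative in `[0, q-1]` of the inverse of `j` mod `q`. -/
def jstar (q j : ℕ) : ℕ := ((j : ZMod q)⁻¹).val

/-- `istar q a` is the representative in `[0, q-1]` of the inverse of the integer `a` mod `q`. -/
def istar (q : ℕ) (a : ℤ) : ℕ := ((a : ZMod q)⁻¹).val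

/-- `μ^{(i)} = ζ^i · ∏_{j=1}^{q−1} (m − n ζ^j)^{j*} ∈ ℤ[ζ_q] ⊆ ℂ`. -/
noncomputable def mu (q : ℕ) (m n : ℤ) (i : ℕ) (ζ : ℂ) : ℂ :=
  ζ^i * ∏ j ∈ Finset.Icc 1 (q-1), ((m : ℂ) - (n : ℂ) * ζ^j)^(jstar q j)

/-- `𝓕_s(x) = Σ_{t=0}^s Σ_{s₁,…,s_t ≥ 1, s₁+⋯+s_t=s} s!/(s₁!⋯s_t!) x^t`, as a function `ℚ → ℚ`. -/
def Fcal (s : ℕ) (x : ℚ) : ℚ :=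
  ∑ t ∈ Finset.range (s+1),
    ∑ c ∈ (Finset.Nat.antidiagonalTuple t s).filter (fun c => ∀ i, 1 ≤ c i),
      (Nat.multinomial Finset.univ c : ℚ) * x ^ t

/-- Coefficientwise reduction of `f_q` mod `q²`. -/
noncomputable def fqBar (q : ℕ) : Polynomial (ZMod (q^2)) :=
  ∑ t ∈ Finset.Icc 1 q,
    Polynomial.C (ratToZMod (q^2) ((fqCoeff q t : ℚ) / (t : ℚ))) * Polynomial.X ^ t



noncomputable def RZ (ζ : ℂ) : Subalgebra ℤ ℂ :=
  (Polynomial.aeval ζ : Polynomial ℤ →ₐ[ℤ] ℂ).range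

lemma mem_RZ {ζ x : ℂ} : x ∈ RZ ζ ↔ ∃ P : Polynomial ℤ, Polynomial.aeval ζ P = x := by
  simp [RZ, AlgHom.mem_range]

lemma zeta_mem (ζ : ℂ) : ζ ∈ RZ ζ := mem_RZ.mpr ⟨X, by simp⟩

lemma intCast_mem_RZ (ζ : ℂ) (n : ℤ) : (n : ℂ) ∈ RZ ζ := by
  exact_mod_cast intCast_mem (RZ ζ) n

lemma lam_mem (ζ : ℂ) : (1 - ζ) ∈ RZ ζ := sub_mem (one_mem _) (zeta_mem ζ)

section main
variable {q : ℕ} {ζ : ℂ}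

lemma lam_ne (hq : q.Prime) (hζ : IsPrimitiveRoot ζ q) : (1 : ℂ) - ζ ≠ 0 :=
  sub_ne_zero.mpr (hζ.ne_one hq.one_lt).symm

/-- Lemma B -/
lemma q_dvd_of_lam_dvd (hq : q.Prime) (hζ : IsPrimitiveRoot ζ q) {n : ℤ} {r : ℂ}
    (hr : r ∈ RZ ζ) (h : (n : ℂ) = (1 - ζ) * r) : (q : ℤ) ∣ n := by
  haveI : Fact q.Prime := ⟨hq⟩
  obtain ⟨P, hP⟩ := mem_RZ.mp hr
  have h0 : Polynomial.aeval ζ (Polynomial.C n - (1 - Polynomial.X) * P) = 0 := by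
    simp only [map_sub, map_mul, map_one, aeval_C, aeval_X, hP]
    rw [← h]
    simp
  have hdvd : minpoly ℤ ζ ∣ (Polynomial.C n - (1 - Polynomial.X) * P) :=
    minpoly.isIntegrallyClosed_dvd (hζ.isIntegral hq.pos) h0
  rw [← Polynomial.cyclotomic_eq_minpoly hζ hq.pos] at hdvd
  obtain ⟨G, hG⟩ := hdvd
  have hone := congrArg (Polynomial.eval 1) hG
  simp [Polynomial.eval_one_cyclotomic_prime] at hone
  exact ⟨G.eval 1, hone⟩

/-- the product formula `q = ∏_{j=1}^{q-1} (1 - ζ^j)` -/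
lemma q_eq_prod (hq : q.Prime) (hζ : IsPrimitiveRoot ζ q) :
    (q : ℂ) = ∏ j ∈ Finset.Icc 1 (q - 1), (1 - ζ ^ j) := by
  have hid : (X ^ q - Polynomial.C (1:ℂ)) = ∏ i ∈ Finset.range q, (X - Polynomial.C (ζ ^ i * 1)) :=
    X_pow_sub_C_eq_prod hζ hq.pos (one_pow q)
  have hsplit : ∏ i ∈ Finset.range q, ((X : Polynomial ℂ) - Polynomial.C (ζ ^ i * 1)) =
      (X - Polynomial.C 1) * ∏ j ∈ Finset.Icc 1 (q-1), (X - Polynomial.C (ζ ^ j * 1)) := by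
    rw [Finset.range_eq_Ico, Finset.prod_eq_prod_Ico_succ_bot hq.pos]
    have : Finset.Ico 1 q = Finset.Icc 1 (q-1) := by
      rw [← Finset.Ico_add_one_right_eq_Icc]
      congr 1
      have := hq.pos
      omega
    rw [this]
    simp
  have hgeom : (X ^ q - Polynomial.C (1:ℂ)) =
      (X - Polynomial.C 1) * (∑ i ∈ Finset.range q, (X:Polynomial ℂ) ^ i) := by
    rw [mul_comm, Polynomial.C_1, geom_sum_mul]
  have hcancel : (∑ i ∈ Finset.range q, (X:Polynomial ℂ) ^ i) =
      ∏ j ∈ Finset.Icc 1 (q-1), (X - Polynomial.C (ζ ^ j * 1)) := by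
    have hne : (X : Polynomial ℂ) - Polynomial.C 1 ≠ 0 := Polynomial.X_sub_C_ne_zero 1
    apply mul_left_cancel₀ hne
    rw [← hgeom, hid, hsplit]
  have := congrArg (Polynomial.eval 1) hcancel
  simpa [Polynomial.eval_prod, Polynomial.eval_finset_sum] using this
end main

section main2
variable {q : ℕ} {ζ : ℂ}

lemma geom_unit (hq : q.Prime) (hζ : IsPrimitiveRoot ζ q) {j : ℕ} (hj : j ∈ Finset.Icc 1 (q-1)) :
    ∃ g h : ℂ, g ∈ RZ ζ ∧ h ∈ RZ ζ ∧ (1 - ζ ^ j) = (1 - ζ) * g ∧ g * h = 1 := by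
  haveI : Fact q.Prime := ⟨hq⟩
  simp only [Finset.mem_Icc] at hj
  have hjq : ¬ q ∣ j := by
    intro hd
    rcases hd with ⟨c, rfl⟩
    rcases Nat.eq_zero_or_pos c with rfl | hc
    · omega
    · have := Nat.le_mul_of_pos_right q hc
      omega
  refine ⟨∑ i ∈ Finset.range j, ζ ^ i, ∑ i ∈ Finset.range (jstar q j), (ζ ^ j) ^ i,
    sum_mem (fun i _ => pow_mem (zeta_mem ζ) i),
    sum_mem (fun i _ => pow_mem (pow_mem (zeta_mem ζ) j) i), ?_, ?_⟩
  · have := geom_sum_mul ζ j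
    linear_combination this
  · -- g * h = 1
    have key : (1 - ζ ^ j) * ∑ i ∈ Finset.range (jstar q j), (ζ ^ j) ^ i = 1 - ζ := by
    -- (1 - x) * geom = 1 - x^m
      have h2 := geom_sum_mul (ζ ^ j) (jstar q j)
      have h3 : (ζ ^ j) ^ (jstar q j) = ζ := by
        rw [← pow_mul]
        have hmod : j * jstar q j ≡ 1 [MOD q] := by
          rw [← ZMod.natCast_eq_natCast_iff]
          push_cast
          rw [jstar, ZMod.natCast_zmod_val]
          rw [mul_inv_cancel₀]
          rwa [Ne, ZMod.natCast_eq_zero_iff]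
        have hq2 := hq.two_le
        set x := j * jstar q j with hx
        have hmod' : x % q = 1 % q := hmod
        have h1m : 1 % q = 1 := Nat.one_mod_eq_one.mpr (by omega)
        have hdm := Nat.div_add_mod x q
        obtain ⟨t, ht⟩ : ∃ t, x = q * t + 1 := ⟨x / q, by omega⟩
        rw [ht, pow_succ, pow_mul, hζ.pow_eq_one, one_pow, one_mul]
      linear_combination -h2 - h3
    have hlam := lam_ne hq hζ
    apply mul_left_cancel₀ hlam
    rw [mul_one]
    calc (1-ζ) * ((∑ i ∈ Finset.range j, ζ ^ i) * ∑ i ∈ Finset.range (jstar q j), (ζ ^ j) ^ i)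
        = ((1-ζ) * ∑ i ∈ Finset.range j, ζ ^ i) * ∑ i ∈ Finset.range (jstar q j), (ζ ^ j) ^ i := by ring
      _ = (1 - ζ ^ j) * ∑ i ∈ Finset.range (jstar q j), (ζ ^ j) ^ i := by
          congr 1
          have := geom_sum_mul ζ j
          linear_combination -this
      _ = 1 - ζ := key

/-- the unit: `q = λ^(q-1) u`, `u v = 1`. -/
lemma exists_unit (hq : q.Prime) (hζ : IsPrimitiveRoot ζ q) :
    ∃ u v : ℂ, u ∈ RZ ζ ∧ v ∈ RZ ζ ∧ (q : ℂ) = (1 - ζ) ^ (q - 1) * u ∧ u * v = 1 := by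
  choose g h hgR hhR hgl hgh using fun j (hj : j ∈ Finset.Icc 1 (q-1)) => geom_unit hq hζ hj
  classical
  refine ⟨∏ j ∈ (Finset.Icc 1 (q-1)).attach, g j.1 j.2, ∏ j ∈ (Finset.Icc 1 (q-1)).attach, h j.1 j.2,
    prod_mem (fun i _ => hgR i.1 i.2), prod_mem (fun i _ => hhR i.1 i.2), ?_, ?_⟩
  · rw [q_eq_prod hq hζ, ← Finset.prod_attach (Finset.Icc 1 (q-1)) (fun j => 1 - ζ ^ j)]
    rw [Finset.prod_congr rfl (fun j _ => hgl j.1 j.2)]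
    rw [Finset.prod_mul_distrib, Finset.prod_const, Finset.card_attach, Nat.card_Icc]
    have hcard : q - 1 + 1 - 1 = q - 1 := by omega
    rw [hcard]
  · rw [← Finset.prod_mul_distrib]
    rw [Finset.prod_congr rfl (fun j _ => hgh j.1 j.2)]
    simp

end main2

section main3
variable {q : ℕ} {ζ : ℂ}

/-- every element of R is an integer plus λ·R -/
lemma exists_int_approx {r : ℂ} (hr : r ∈ RZ ζ) :
    ∃ (n : ℤ) (s : ℂ), s ∈ RZ ζ ∧ r = (n : ℂ) + (1 - ζ) * s := by
  obtain ⟨P, hP⟩ := mem_RZ.mp hr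
  have hdvd : (X - Polynomial.C 1) ∣ (P - Polynomial.C (P.eval 1)) := by
    apply Polynomial.dvd_iff_isRoot.mpr
    simp [Polynomial.IsRoot]
  obtain ⟨S, hS⟩ := hdvd
  refine ⟨P.eval 1, -(Polynomial.aeval ζ S), neg_mem (mem_RZ.mpr ⟨S, rfl⟩), ?_⟩
  have := congrArg (Polynomial.aeval ζ) hS
  simp only [map_sub, map_mul, map_one, map_intCast, aeval_C, aeval_X, algebraMap_int_eq,
    eq_intCast] at this
  rw [← hP]
  linear_combination this

/-- digit expansion to any depth -/
lemma exists_digits (m : ℕ) {r : ℂ} (hr : r ∈ RZ ζ) :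
    ∃ (c : ℕ → ℤ) (s : ℂ), s ∈ RZ ζ ∧
      r = (∑ k ∈ Finset.range m, (c k : ℂ) * (1 - ζ) ^ k) + (1 - ζ) ^ m * s := by
  induction m with
  | zero => exact ⟨fun _ => 0, r, hr, by simp⟩
  | succ m ih =>
    obtain ⟨c, s, hsR, hs⟩ := ih
    obtain ⟨n, s', hs'R, hs'⟩ := exists_int_approx hsR
    refine ⟨fun k => if k = m then n else c k, s', hs'R, ?_⟩
    rw [Finset.sum_range_succ]
    have hsum : ∑ k ∈ Finset.range m, ((if k = m then (n:ℂ) else (c k : ℂ)) * (1 - ζ) ^ k)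
        = ∑ k ∈ Finset.range m, (c k : ℂ) * (1 - ζ) ^ k := by
      apply Finset.sum_congr rfl
      intro k hk
      rw [if_neg (Finset.mem_range.mp hk).ne]
    push_cast
    rw [hsum, if_pos rfl, hs, hs']
    ring

/-- Lemma U : digits of a multiple of λ^m are divisible by q -/
lemma q_dvd_digits (hq : q.Prime) (hζ : IsPrimitiveRoot ζ q) :
    ∀ m, m ≤ q - 1 → ∀ (d : ℕ → ℤ) (s : ℂ), s ∈ RZ ζ →
      (∑ k ∈ Finset.range m, (d k : ℂ) * (1 - ζ) ^ k) = (1 - ζ) ^ m * s →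
      ∀ k < m, (q : ℤ) ∣ d k := by
  obtain ⟨u, v, huR, hvR, hqu, huv⟩ := exists_unit hq hζ
  have hq2 := hq.two_le
  intro m
  induction m with
  | zero => intro _ _ _ _ _ k hk; omega
  | succ m ih =>
    intro hm d s hsR hsum
    rw [Finset.sum_range_succ'] at hsum
    -- hsum : ∑ k in range m, d (k+1) * λ^(k+1) + d 0 * λ^0 = λ^(m+1) * s
    have hT : ∑ k ∈ Finset.range m, ((d (k+1) : ℂ)) * (1 - ζ) ^ (k+1)
        = (1 - ζ) * ∑ k ∈ Finset.range m, (d (k+1) : ℂ) * (1 - ζ) ^ k := by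
      rw [Finset.mul_sum]; apply Finset.sum_congr rfl; intro k _; ring
    have hTR : (∑ k ∈ Finset.range m, (d (k+1) : ℂ) * (1 - ζ) ^ k) ∈ RZ ζ :=
      sum_mem (fun k _ => mul_mem (intCast_mem_RZ ζ _) (pow_mem (lam_mem ζ) k))
    have hd0 : ((d 0 : ℂ)) = (1 - ζ) *
        ((1 - ζ) ^ m * s - ∑ k ∈ Finset.range m, (d (k+1) : ℂ) * (1 - ζ) ^ k) := by
      linear_combination hsum - hT
    have hq_dvd_d0 : (q : ℤ) ∣ d 0 :=
      q_dvd_of_lam_dvd hq hζ (sub_mem (mul_mem (pow_mem (lam_mem ζ) m) hsR) hTR) hd0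
    obtain ⟨e, he⟩ := hq_dvd_d0
    -- now cancel λ
    have hstep : ∑ k ∈ Finset.range m, (d (k+1) : ℂ) * (1 - ζ) ^ k
        = (1 - ζ) ^ m * (s - (1 - ζ) ^ (q - 2 - m) * u * e) := by
      apply mul_left_cancel₀ (lam_ne hq hζ)
      have hqe : ((d 0 : ℂ)) = (1 - ζ) ^ (q - 1) * u * e := by
        rw [he]; push_cast; rw [hqu]
      have hexp : ((1 : ℂ) - ζ) ^ (q - 1) = (1 - ζ) * ((1 - ζ) ^ m * (1 - ζ) ^ (q - 2 - m)) := by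
        have h' : q - 1 = 1 + m + (q - 2 - m) := by omega
        rw [h', pow_add, pow_add, pow_one, mul_assoc]
      linear_combination hsum - hqe - hexp * (u * (e : ℂ)) - hT
    have := ih (by omega) (fun k => d (k+1)) _ (sub_mem hsR (mul_mem (mul_mem (pow_mem (lam_mem ζ) _) huR) (intCast_mem_RZ ζ e))) hstep
    intro k hk
    rcases Nat.eq_zero_or_pos k with rfl | hkpos
    · exact ⟨e, he⟩
    · obtain ⟨k', rfl⟩ := Nat.exists_eq_add_of_lt hkpos
      simpa using this (0 + k') (by omega)

end main3

section main4
variable {q : ℕ} {ζ : ℂ}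

/-- canonical representative -/
lemma exists_rep (hq : q.Prime) (hζ : IsPrimitiveRoot ζ q) {r : ℂ} (hr : r ∈ RZ ζ) :
    ∃ a : ℕ → ℕ,
      (a 0 < q^2 ∧ (∀ k, 1 ≤ k → k ≤ q - 2 → a k < q) ∧ (∀ k, q - 1 ≤ k → a k = 0)) ∧
      ∃ s ∈ RZ ζ, r - ∑ k ∈ Finset.range (q - 1), (a k : ℂ) * (1 - ζ) ^ k = (1 - ζ) ^ q * s := by
  obtain ⟨u, v, huR, hvR, hqu, huv⟩ := exists_unit hq hζ
  have hq2 := hq.two_le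
  have hq1 : q - 1 + 1 = q := by omega
  -- helper identities
  have hql : (q : ℂ) * (1 - ζ) = (1 - ζ) ^ q * u := by
    rw [hqu]
    have h' : ((1:ℂ) - ζ) ^ (q-1) * (1 - ζ) = (1 - ζ) ^ q := by
      rw [← pow_succ, hq1]
    linear_combination h' * u
  have hq2c : ((q : ℂ)) ^ 2 = (1 - ζ) ^ q * ((1 - ζ) ^ (q - 2) * u ^ 2) := by
    rw [hqu]
    have h' : ((1:ℂ) - ζ) ^ (q-1) * (1 - ζ) ^ (q-1) = (1 - ζ) ^ q * (1 - ζ) ^ (q-2) := by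
      rw [← pow_add, ← pow_add]; congr 1; omega
    linear_combination h' * u ^ 2
  have hqlamk : ∀ k, 1 ≤ k → (q : ℂ) * (1 - ζ) ^ k = (1 - ζ) ^ q * ((1 - ζ) ^ (k - 1) * u) := by
    intro k hk
    rw [hqu]
    have h' : ((1:ℂ) - ζ) ^ (q-1) * (1 - ζ) ^ k = (1 - ζ) ^ q * (1 - ζ) ^ (k-1) := by
      rw [← pow_add, ← pow_add]; congr 1; omega
    linear_combination h' * u
  obtain ⟨c, s0, hs0R, hs0⟩ := exists_digits q hr
  -- λ^(q-1) = q v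
  have hlamv : (1 - ζ) ^ (q - 1) = (q : ℂ) * v := by
    rw [hqu]
    calc (1 - ζ) ^ (q-1) = (1 - ζ) ^ (q-1) * (u * v) := by rw [huv, mul_one]
      _ = (1 - ζ) ^ (q - 1) * u * v := by ring
  obtain ⟨n₀, t, htR, ht⟩ := exists_int_approx hvR
  -- peel off top digit
  set c' : ℕ → ℤ := fun k => if k = 0 then c 0 + c (q-1) * q * n₀ else c k with hc'
  have hstep1 : r = (∑ k ∈ Finset.range (q-1), (c' k : ℂ) * (1 - ζ) ^ k)
      + (1 - ζ) ^ q * (s0 + u * t * c (q-1)) := by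
    have hpeel : ∑ k ∈ Finset.range q, (c k : ℂ) * (1 - ζ) ^ k
        = (∑ k ∈ Finset.range (q-1), (c k : ℂ) * (1 - ζ) ^ k) + (c (q-1) : ℂ) * (1-ζ)^(q-1) := by
      rw [← hq1, Finset.sum_range_succ]
      simp [hq1]
    have hdiff : (∑ k ∈ Finset.range (q-1), (c' k : ℂ) * (1 - ζ) ^ k)
        - (∑ k ∈ Finset.range (q-1), (c k : ℂ) * (1 - ζ) ^ k) = (c (q-1) : ℂ) * q * n₀ := by
      rw [← Finset.sum_sub_distrib]
      rw [Finset.sum_eq_single_of_mem 0 (Finset.mem_range.mpr (by omega))]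
      · have h0 : c' 0 = c 0 + c (q-1) * q * n₀ := by simp [hc']
        rw [h0]
        push_cast
        ring
      · intro k _ hk0
        have h0 : c' k = c k := by simp [hc', if_neg hk0]
        rw [h0]
        ring
    have hcq : (c (q-1) : ℂ) * (1-ζ)^(q-1) = (c (q-1) : ℂ) * q * n₀
        + (1 - ζ) ^ q * (u * t * c (q-1)) := by
      rw [hlamv, ht]
      linear_combination (c (q-1) : ℂ) * t * hql
    rw [hs0, hpeel, hcq]
    linear_combination -hdiff
  -- now reduce the digits
  set a : ℕ → ℕ := fun k =>
    if k = 0 then ((c' 0) % ((q:ℤ)^2)).toNat else if k < q - 1 then ((c' k) % (q:ℤ)).toNat else 0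
    with ha
  have hq2pos : (0:ℤ) < (q:ℤ)^2 := by positivity
  have hqpos : (0:ℤ) < (q:ℤ) := by exact_mod_cast hq.pos
  have ha0 : ((a 0 : ℤ)) = c' 0 % ((q:ℤ)^2) := by
    simp only [ha, if_pos rfl]
    exact Int.toNat_of_nonneg (Int.emod_nonneg _ hq2pos.ne')
  have hak : ∀ k, 1 ≤ k → k < q - 1 → ((a k : ℤ)) = c' k % (q:ℤ) := by
    intro k h1 h2
    simp only [ha, if_neg (by omega : ¬ k = 0), if_pos h2]
    exact Int.toNat_of_nonneg (Int.emod_nonneg _ hqpos.ne')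
  refine ⟨a, ⟨?_, ?_, ?_⟩, ?_⟩
  · have h1 : (a 0 : ℤ) < (q:ℤ)^2 := ha0 ▸ Int.emod_lt_of_pos _ hq2pos
    exact_mod_cast h1
  · intro k hk1 hk2
    have h1 : (a k : ℤ) < (q:ℤ) := (hak k hk1 (by omega)) ▸ Int.emod_lt_of_pos _ hqpos
    exact_mod_cast h1
  · intro k hk
    rcases Nat.eq_zero_or_pos k with rfl | hkpos
    · omega
    · simp only [ha, if_neg (by omega : ¬ k = 0), if_neg (by omega : ¬ k < q - 1)]
  · -- the congruence
    set W : ℕ → ℂ := fun k =>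
      if k = 0 then ((c' 0 / ((q:ℤ)^2) : ℤ) : ℂ) * ((1-ζ)^(q-2) * u^2)
      else ((c' k / (q:ℤ) : ℤ) : ℂ) * ((1-ζ)^(k-1) * u) with hW
    have hWR : ∀ k, W k ∈ RZ ζ := by
      intro k
      simp only [hW]
      split
      · exact mul_mem (intCast_mem_RZ ζ _) (mul_mem (pow_mem (lam_mem ζ) _) (pow_mem huR 2))
      · exact mul_mem (intCast_mem_RZ ζ _) (mul_mem (pow_mem (lam_mem ζ) _) huR)
    have hterm : ∀ k ∈ Finset.range (q-1),
        ((c' k : ℂ) - (a k : ℂ)) * (1-ζ)^k = (1-ζ)^q * W k := by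
      intro k hk
      rcases Nat.eq_zero_or_pos k with rfl | hkpos
      · have hed := Int.emod_add_mul_ediv (c' 0) ((q:ℤ)^2)
        have hz : (c' 0 : ℤ) - ((a 0 : ℕ) : ℤ) = (q:ℤ)^2 * (c' 0 / (q:ℤ)^2) := by
          rw [ha0]; linarith [hed]
        have hzc := congrArg (fun z : ℤ => (z : ℂ)) hz
        push_cast at hzc
        have : ((c' 0 : ℂ)) - (a 0 : ℂ) = ((q:ℂ))^2 * ((c' 0 / ((q:ℤ)^2) : ℤ) : ℂ) := by
          push_cast
          linear_combination hzc
        simp only [hW, if_pos rfl, pow_zero, mul_one]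
        rw [this, hq2c]
        ring
      · have hklt := Finset.mem_range.mp hk
        have hed := Int.emod_add_mul_ediv (c' k) ((q:ℤ))
        have hz : (c' k : ℤ) - ((a k : ℕ) : ℤ) = (q:ℤ) * (c' k / (q:ℤ)) := by
          rw [hak k hkpos hklt]; linarith [hed]
        have hzc := congrArg (fun z : ℤ => (z : ℂ)) hz
        push_cast at hzc
        have hcast : ((c' k : ℂ)) - (a k : ℂ) = ((q:ℂ)) * ((c' k / ((q:ℤ)) : ℤ) : ℂ) := by
          push_cast
          linear_combination hzc
        simp only [hW, if_neg (by omega : ¬ k = 0)]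
        rw [mul_comm ((c' k : ℂ) - (a k : ℂ)) ((1-ζ)^k), hcast, ← mul_assoc, mul_comm ((1-ζ)^k) ((q:ℂ)), hqlamk k hkpos]
        ring
    refine ⟨s0 + u * t * c (q-1) + ∑ k ∈ Finset.range (q-1), W k,
      add_mem (add_mem hs0R (mul_mem (mul_mem huR htR) (intCast_mem_RZ ζ _)))
        (sum_mem fun k _ => hWR k), ?_⟩
    have hsub : (∑ k ∈ Finset.range (q-1), (c' k : ℂ) * (1-ζ)^k)
        - ∑ k ∈ Finset.range (q-1), (a k : ℂ) * (1-ζ)^k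
        = ∑ k ∈ Finset.range (q-1), ((c' k : ℂ) - (a k : ℂ)) * (1-ζ)^k := by
      rw [← Finset.sum_sub_distrib]
      apply Finset.sum_congr rfl
      intro k _
      ring
    have hsplit : r - ∑ k ∈ Finset.range (q-1), (a k : ℂ) * (1-ζ)^k
        = (∑ k ∈ Finset.range (q-1), ((c' k : ℂ) - (a k : ℂ)) * (1-ζ)^k)
          + (1 - ζ) ^ q * (s0 + u * t * c (q-1)) := by
      rw [hstep1]
      linear_combination hsub
    rw [hsplit, Finset.sum_congr rfl hterm, ← Finset.mul_sum]
    ring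

end main4

section main5
variable {q : ℕ} {ζ : ℂ}

/-- uniqueness of representatives -/
lemma rep_unique (hq : q.Prime) (hζ : IsPrimitiveRoot ζ q) {a a' : ℕ → ℕ}
    (hb0 : a 0 < q^2) (hb : ∀ k, 1 ≤ k → k ≤ q - 2 → a k < q)
    (hb0' : a' 0 < q^2) (hb' : ∀ k, 1 ≤ k → k ≤ q - 2 → a' k < q)
    {s : ℂ} (hsR : s ∈ RZ ζ)
    (h : (∑ k ∈ Finset.range (q-1), (a k : ℂ) * (1-ζ)^k)
       - (∑ k ∈ Finset.range (q-1), (a' k : ℂ) * (1-ζ)^k) = (1-ζ)^q * s) :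
    ∀ k < q - 1, a k = a' k := by
  obtain ⟨u, v, huR, hvR, hqu, huv⟩ := exists_unit hq hζ
  have hq2 := hq.two_le
  have hq1 : q - 1 + 1 = q := by omega
  set d : ℕ → ℤ := fun k => (a k : ℤ) - (a' k : ℤ) with hd
  have hsum : (∑ k ∈ Finset.range (q-1), (d k : ℂ) * (1-ζ)^k) = (1-ζ)^(q-1) * ((1-ζ) * s) := by
    have : (∑ k ∈ Finset.range (q-1), (d k : ℂ) * (1-ζ)^k)
        = (∑ k ∈ Finset.range (q-1), (a k : ℂ) * (1-ζ)^k)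
          - (∑ k ∈ Finset.range (q-1), (a' k : ℂ) * (1-ζ)^k) := by
      rw [← Finset.sum_sub_distrib]
      apply Finset.sum_congr rfl
      intro k _
      simp only [hd]
      push_cast
      ring
    have hpow : ((1:ℂ)-ζ)^q = (1-ζ)^(q-1) * (1-ζ) := by rw [← pow_succ, hq1]
    rw [this, h, hpow]
    ring
  have hdvd : ∀ k < q - 1, (q:ℤ) ∣ d k :=
    q_dvd_digits hq hζ (q-1) le_rfl d _ (mul_mem (lam_mem ζ) hsR) hsum
  have hzero : ∀ k, 1 ≤ k → k < q - 1 → d k = 0 := by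
    intro k h1 h2
    apply Int.eq_zero_of_abs_lt_dvd (hdvd k h2)
    have b1 := hb k h1 (by omega)
    have b2 := hb' k h1 (by omega)
    have hdk : d k = ((a k : ℕ) : ℤ) - ((a' k : ℕ) : ℤ) := rfl
    rw [hdk, abs_lt]
    constructor <;> [skip; skip] <;> push_cast <;> omega
  -- now the constant term
  have hd0 : ∀ k < q - 1, d k = 0 := by
    have hdc : ((d 0 : ℂ)) = (1-ζ)^q * s := by
      rw [← h, ← Finset.sum_sub_distrib]
      rw [Finset.sum_eq_single_of_mem 0 (Finset.mem_range.mpr (by omega))]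
      · simp only [hd]; push_cast; ring
      · intro k hk hk0
        have h0 : (a k : ℤ) = (a' k : ℤ) := by
          have h00 : ((a k : ℕ) : ℤ) - ((a' k : ℕ) : ℤ) = 0 := hzero k (by omega) (Finset.mem_range.mp hk)
          omega
        have h1 : (a k : ℕ) = a' k := by exact_mod_cast h0
        rw [h1]
        ring
    obtain ⟨e, he⟩ := hdvd 0 (by omega)
    have hue : u * e = (1 - ζ) * s := by
      apply mul_left_cancel₀ (pow_ne_zero (q-1) (lam_ne hq hζ))
      have h1 : ((d 0 : ℂ)) = (1-ζ)^(q-1) * (u * e) := by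
        rw [he]; push_cast; rw [hqu]; ring
      have h2 : ((1:ℂ)-ζ)^q = (1-ζ)^(q-1) * (1-ζ) := by rw [← pow_succ, hq1]
      rw [← h1]
      rw [hdc, h2]
      ring
    have heq : ((e : ℂ)) = (1 - ζ) * (s * v) := by
      calc ((e:ℂ)) = (u * v) * e := by rw [huv]; ring
        _ = (u * e) * v := by ring
        _ = ((1-ζ) * s) * v := by rw [hue]
        _ = (1-ζ) * (s * v) := by ring
    have hqe : (q:ℤ) ∣ e := q_dvd_of_lam_dvd hq hζ (mul_mem hsR hvR) heq
    have : d 0 = 0 := by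
      apply Int.eq_zero_of_abs_lt_dvd (by
        obtain ⟨f, hf⟩ := hqe
        exact ⟨f, by rw [he, hf]; push_cast; ring⟩ : ((q:ℤ)^2 ∣ d 0))
      have hd00 : d 0 = ((a 0 : ℕ) : ℤ) - ((a' 0 : ℕ) : ℤ) := rfl
      rw [hd00, abs_lt]
      have hb0z : ((a 0 : ℕ) : ℤ) < (q:ℤ)^2 := by exact_mod_cast hb0
      have hb0z' : ((a' 0 : ℕ) : ℤ) < (q:ℤ)^2 := by exact_mod_cast hb0'
      have hA : (0:ℤ) ≤ ((a 0 : ℕ) : ℤ) := Int.natCast_nonneg _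
      have hA' : (0:ℤ) ≤ ((a' 0 : ℕ) : ℤ) := Int.natCast_nonneg _
      constructor <;> linarith
    intro k hk
    rcases Nat.eq_zero_or_pos k with rfl | hkpos
    · exact this
    · exact hzero k hkpos hk
  intro k hk
  have h00 : ((a k : ℕ) : ℤ) - ((a' k : ℕ) : ℤ) = 0 := hd0 k hk
  omega

/-- q-th power is congruent to an integer q-th power mod λ^q -/
lemma pow_q_approx (hq : q.Prime) (hζ : IsPrimitiveRoot ζ q) {r : ℂ} (hr : r ∈ RZ ζ) :
    ∃ (c : ℤ) (s : ℂ), s ∈ RZ ζ ∧ r ^ q - (c : ℂ) ^ q = (1 - ζ) ^ q * s := by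
  obtain ⟨u, v, huR, hvR, hqu, huv⟩ := exists_unit hq hζ
  have hq2 := hq.two_le
  have hq1 : q - 1 + 1 = q := by omega
  have hql : (q : ℂ) * (1 - ζ) = (1 - ζ) ^ q * u := by
    rw [hqu]
    have h' : ((1:ℂ) - ζ) ^ (q-1) * (1 - ζ) = (1 - ζ) ^ q := by rw [← pow_succ, hq1]
    linear_combination h' * u
  obtain ⟨c, t, htR, ht⟩ := exists_int_approx hr
  have happ := add_pow_prime_eq hq ((c:ℂ)) ((1 - ζ) * t)
  set S₁ : ℂ := ∑ k ∈ Finset.Ioo 0 q, (c:ℂ)^k * (1-ζ)^(q-k-1) * t^(q-k) * ((q.choose k / q : ℕ) : ℂ)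
    with hS₁
  have hS₁R : S₁ ∈ RZ ζ := sum_mem fun k _ => mul_mem (mul_mem (mul_mem
    (pow_mem (intCast_mem_RZ ζ c) k) (pow_mem (lam_mem ζ) _)) (pow_mem htR _))
    (by exact_mod_cast natCast_mem (RZ ζ) _)
  have hS0 : (∑ k ∈ Finset.Ioo 0 q, (c:ℂ)^k * ((1-ζ)*t)^(q-k) * ((q.choose k / q : ℕ) : ℂ))
      = (1 - ζ) * S₁ := by
    rw [hS₁, Finset.mul_sum]
    apply Finset.sum_congr rfl
    intro k hk
    obtain ⟨hk0, hkq⟩ := Finset.mem_Ioo.mp hk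
    have he : ((1:ℂ)-ζ)^(q-k) = (1-ζ) * (1-ζ)^(q-k-1) := by
      rw [← pow_succ']
      congr 1
      omega
    rw [mul_pow, he]
    ring
  have hsum : (c:ℂ) * ((1-ζ)*t) * ∑ k ∈ Finset.Ioo 0 q, (c:ℂ)^(k-1) * ((1-ζ)*t)^(q-k-1) * ((q.choose k / q : ℕ) : ℂ)
      = ∑ k ∈ Finset.Ioo 0 q, (c:ℂ)^k * ((1-ζ)*t)^(q-k) * ((q.choose k / q : ℕ) : ℂ) := by
    rw [Finset.mul_sum]
    apply Finset.sum_congr rfl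
    intro k hk
    obtain ⟨hk0, hkq⟩ := Finset.mem_Ioo.mp hk
    have e1 : (c:ℂ)^k = (c:ℂ)^(k-1) * c := by rw [← pow_succ, Nat.sub_add_cancel hk0]
    have e2 : ((1-ζ)*t)^(q-k) = ((1-ζ)*t)^(q-k-1) * ((1-ζ)*t) := by
      rw [← pow_succ]; congr 1; omega
    rw [e1, e2]
    ring
  refine ⟨c, t^q + u * S₁, add_mem (pow_mem htR q) (mul_mem huR hS₁R), ?_⟩
  rw [ht]
  calc ((c:ℂ) + (1-ζ)*t)^q - (c:ℂ)^q
      = ((1-ζ)*t)^q + (q:ℂ) * ∑ k ∈ Finset.Ioo 0 q, (c:ℂ)^k * ((1-ζ)*t)^(q-k) * ((q.choose k / q : ℕ) : ℂ) := by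
        linear_combination happ + (q:ℂ) * hsum
    _ = ((1-ζ)*t)^q + ((q:ℂ) * (1-ζ)) * S₁ := by rw [hS0]; ring
    _ = (1-ζ)^q * (t^q + u * S₁) := by rw [hql, mul_pow]; ring

lemma congZeta_iff {e : ℕ} {x y : ℂ} :
    congZeta ζ e x y ↔ ∃ s ∈ RZ ζ, x - y = (1 - ζ) ^ e * s := by
  constructor
  · rintro ⟨P, hP⟩
    exact ⟨_, mem_RZ.mpr ⟨P, rfl⟩, hP⟩
  · rintro ⟨s, hs, h⟩
    obtain ⟨P, rfl⟩ := mem_RZ.mp hs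
    exact ⟨P, h⟩

end main5


theorem stmt7 (q : ℕ) (hq : q.Prime) (hodd : Odd q)
    (ζ : ℂ) (hζ : IsPrimitiveRoot ζ q) :
    (∀ P : Polynomial ℤ, ∃! a : ℕ → ℕ,
      (a 0 < q^2 ∧ (∀ k, 1 ≤ k → k ≤ q - 2 → a k < q) ∧ (∀ k, q - 1 ≤ k → a k = 0)) ∧
        congZeta ζ q (Polynomial.aeval ζ P)
          (∑ k ∈ Finset.range (q - 1), (a k : ℂ) * (1 - ζ) ^ k)) ∧
    (∀ a : ℕ → ℕ, a 0 < q^2 → (∀ k, 1 ≤ k → k ≤ q - 2 → a k < q) →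
      ((∃ ξQ : Polynomial ℤ, congZeta ζ q
          (∑ k ∈ Finset.range (q - 1), (a k : ℂ) * (1 - ζ) ^ k)
          ((Polynomial.aeval ζ ξQ) ^ q)) ↔
        ((∀ k, 1 ≤ k → k ≤ q - 2 → a k = 0) ∧
          ∃ b : ℤ, (a 0 : ℤ) ≡ b ^ q [ZMOD ((q : ℤ)^2)]))) := by
  have hq2 := hq.two_le
  have hq1 : q - 1 + 1 = q := by omega
  obtain ⟨u, v, huR, hvR, hqu, huv⟩ := exists_unit hq hζ
  have hq2c : ((q : ℂ)) ^ 2 = (1 - ζ) ^ q * ((1 - ζ) ^ (q - 2) * u ^ 2) := by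
    rw [hqu]
    have h' : ((1:ℂ) - ζ) ^ (q-1) * (1 - ζ) ^ (q-1) = (1 - ζ) ^ q * (1 - ζ) ^ (q-2) := by
      rw [← pow_add, ← pow_add]; congr 1; omega
    linear_combination h' * u ^ 2
  constructor
  · -- part (i)
    intro P
    have hx : Polynomial.aeval ζ P ∈ RZ ζ := mem_RZ.mpr ⟨P, rfl⟩
    obtain ⟨a, hbnd, s, hsR, hs⟩ := exists_rep hq hζ hx
    refine ⟨a, ⟨hbnd, congZeta_iff.mpr ⟨s, hsR, hs⟩⟩, ?_⟩
    rintro a' ⟨⟨hb0', hbk', hz'⟩, hcong'⟩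
    obtain ⟨s', hs'R, hs'⟩ := congZeta_iff.mp hcong'
    have hdiffeq : (∑ k ∈ Finset.range (q-1), (a' k : ℂ) * (1-ζ)^k)
        - (∑ k ∈ Finset.range (q-1), (a k : ℂ) * (1-ζ)^k) = (1-ζ)^q * (s - s') := by
      linear_combination hs - hs'
    have huniq := rep_unique hq hζ hb0' hbk' hbnd.1 hbnd.2.1 (sub_mem hsR hs'R) hdiffeq
    funext k
    by_cases hk : k < q - 1
    · exact huniq k hk
    · rw [hz' k (by omega), hbnd.2.2 k (by omega)]
  · -- part (ii)
    intro a hb0 hbk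
    constructor
    · rintro ⟨ξQ, hcong⟩
      obtain ⟨s₁, hs₁R, hs₁⟩ := congZeta_iff.mp hcong
      have hξ : Polynomial.aeval ζ ξQ ∈ RZ ζ := mem_RZ.mpr ⟨ξQ, rfl⟩
      obtain ⟨c, s₂, hs₂R, hs₂⟩ := pow_q_approx hq hζ hξ
      set a' : ℕ → ℕ := fun k => if k = 0 then ((c^q) % ((q:ℤ)^2)).toNat else 0 with ha'
      have hq2pos : (0:ℤ) < (q:ℤ)^2 := by positivity
      have ha'0 : ((a' 0 : ℕ) : ℤ) = c^q % ((q:ℤ)^2) := by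
        simp only [ha', if_pos rfl]
        exact Int.toNat_of_nonneg (Int.emod_nonneg _ hq2pos.ne')
      have ha'k : ∀ k, k ≠ 0 → a' k = 0 := by
        intro k hk
        simp only [ha', if_neg hk]
      have hrep' : (∑ k ∈ Finset.range (q-1), (a' k : ℂ) * (1-ζ)^k) = ((a' 0 : ℕ) : ℂ) := by
        rw [Finset.sum_eq_single_of_mem 0 (Finset.mem_range.mpr (by omega))]
        · simp
        · intro k hk hk0
          rw [ha'k k hk0]
          simp
      have hed := Int.emod_add_mul_ediv (c^q) ((q:ℤ)^2)
      have hz : (c^q : ℤ) - ((a' 0 : ℕ) : ℤ) = (q:ℤ)^2 * (c^q / (q:ℤ)^2) := by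
        rw [ha'0]; linarith
      have hzc := congrArg (fun z : ℤ => (z:ℂ)) hz
      push_cast at hzc
      have h3 : ((c:ℂ)^q) - ((a' 0 : ℕ) : ℂ)
          = (1-ζ)^q * (((c^q / (q:ℤ)^2 : ℤ) : ℂ) * ((1-ζ)^(q-2) * u^2)) := by
        linear_combination hzc + hq2c * ((c^q / (q:ℤ)^2 : ℤ) : ℂ)
      have hdiffeq : (∑ k ∈ Finset.range (q-1), (a k : ℂ) * (1-ζ)^k)
          - (∑ k ∈ Finset.range (q-1), (a' k : ℂ) * (1-ζ)^k)
          = (1-ζ)^q * (s₁ + s₂ + ((c^q / (q:ℤ)^2 : ℤ) : ℂ) * ((1-ζ)^(q-2) * u^2)) := by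
        rw [hrep']
        linear_combination hs₁ + hs₂ + h3
      have hb0'2 : a' 0 < q^2 := by
        have h1 : ((a' 0 : ℕ) : ℤ) < (q:ℤ)^2 := ha'0 ▸ Int.emod_lt_of_pos _ hq2pos
        exact_mod_cast h1
      have hbk'2 : ∀ k, 1 ≤ k → k ≤ q - 2 → a' k < q := by
        intro k h1 _
        rw [ha'k k (by omega)]
        exact hq.pos
      have huniq := rep_unique hq hζ hb0 hbk hb0'2 hbk'2
        (add_mem (add_mem hs₁R hs₂R) (mul_mem (intCast_mem_RZ ζ _)
          (mul_mem (pow_mem (lam_mem ζ) _) (pow_mem huR 2)))) hdiffeq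
      refine ⟨?_, c, ?_⟩
      · intro k h1 h2
        rw [huniq k (by omega)]
        exact ha'k k (by omega)
      · have h0 : (a 0 : ℤ) = c^q % ((q:ℤ)^2) := by
          rw [← ha'0]
          exact_mod_cast congrArg (fun n : ℕ => (n : ℤ)) (huniq 0 (by omega))
        show (a 0 : ℤ) % ((q:ℤ)^2) = c^q % ((q:ℤ)^2)
        rw [h0]
        exact Int.emod_emod_of_dvd _ dvd_rfl
    · rintro ⟨hzero, b, hb⟩
      have hrep : (∑ k ∈ Finset.range (q-1), (a k : ℂ) * (1-ζ)^k) = ((a 0 : ℕ) : ℂ) := by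
        rw [Finset.sum_eq_single_of_mem 0 (Finset.mem_range.mpr (by omega))]
        · simp
        · intro k hk hk0
          rw [hzero k (by omega) (by have := Finset.mem_range.mp hk; omega)]
          simp
      have hdvd : ((q:ℤ)^2) ∣ b^q - (a 0 : ℤ) := Int.ModEq.dvd hb
      obtain ⟨t, ht⟩ := hdvd
      have htc := congrArg (fun z : ℤ => (z:ℂ)) ht
      push_cast at htc
      refine ⟨Polynomial.C b, congZeta_iff.mpr
        ⟨(-(t:ℂ)) * ((1-ζ)^(q-2) * u^2),
         mul_mem (neg_mem (intCast_mem_RZ ζ t)) (mul_mem (pow_mem (lam_mem ζ) _) (pow_mem huR 2)),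
         ?_⟩⟩
      have haev : Polynomial.aeval ζ (Polynomial.C b) = (b : ℂ) := by
        simp [aeval_C, algebraMap_int_eq, eq_intCast]
      rw [hrep, haev]
      linear_combination - htc - hq2c * ((t:ℂ))
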